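/- Let {τ_k} ↗ +∞ and let w^k = (x^k, u^k) solve the penalized problem (3.1) for τ = τ_k with {w^k} bounded. Then any limit point x̄ of {x^k} is a normalized equilibrium point of the original problem: x̄ ∈ D and Φ(x̄, x) ≥ 0 for all x ∈ D. -/

import Mathlib

open Filter Bornology

/-- with `τ_k ↗ +∞` and `w^k = (x^k,u^k)` bounded solutions of the
penalized problem (3.1), any limit point `x̄` of `{x^k}` is a normalized equilibrium
point: `x̄ ∈ D` and `Φ(x̄,x) ≥ 0` for all `x ∈ D`. -/
theorem statement15 {l M : ℕ} {n : Fin l → ℕ}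
    (X : Set ((i : Fin l) → EuclideanSpace ℝ (Fin (n i)))) (hXcl : IsClosed X)
    (U : Set (Fin l → EuclideanSpace ℝ (Fin M))) (b : EuclideanSpace ℝ (Fin M))
    (hU : ∀ u ∈ U, ∑ i, u i = b)
    (Φ : ((i : Fin l) → EuclideanSpace ℝ (Fin (n i))) →
      ((i : Fin l) → EuclideanSpace ℝ (Fin (n i))) → ℝ)
    (hΦc : Continuous fun p : ((i : Fin l) → EuclideanSpace ℝ (Fin (n i))) ×
      ((i : Fin l) → EuclideanSpace ℝ (Fin (n i))) => Φ p.1 p.2)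
    (hΦ0 : ∀ x, Φ x x = 0)
    (φ : EuclideanSpace ℝ (Fin M) → ℝ) (hφc : Continuous φ) (hφ0 : ∀ v, 0 ≤ φ v)
    (hφiff : ∀ v : EuclideanSpace ℝ (Fin M), φ v = 0 ↔ ∀ j, v j ≤ 0)
    (h : (i : Fin l) → EuclideanSpace ℝ (Fin (n i)) → EuclideanSpace ℝ (Fin M))
    (hhc : ∀ i, Continuous (h i))
    (hD : ({x ∈ X | ∀ j, (∑ i, h i (x i)) j ≤ b j}).Nonempty)
    (hfeas : ∀ x ∈ {x ∈ X | ∀ j, (∑ i, h i (x i)) j ≤ b j},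
      ∃ u ∈ U, ∀ i j, h i (x i) j ≤ u i j)
    (τ : ℕ → ℝ) (hτpos : ∀ k, 0 < τ k) (hτmono : Monotone τ)
    (hτ_inf : Tendsto τ atTop atTop)
    (w : ℕ → ((i : Fin l) → EuclideanSpace ℝ (Fin (n i))) ×
      (Fin l → EuclideanSpace ℝ (Fin M)))
    (hwX : ∀ k, (w k).1 ∈ X) (hwU : ∀ k, (w k).2 ∈ U)
    (hsol : ∀ k, ∀ x ∈ X, ∀ u ∈ U,
      Φ (w k).1 x + τ k * ((∑ i, φ (h i (x i) - u i))
        - ∑ i, φ (h i ((w k).1 i) - (w k).2 i)) ≥ 0)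
    (hbdd : IsBounded (Set.range w))
    (wbar : ((i : Fin l) → EuclideanSpace ℝ (Fin (n i))) ×
      (Fin l → EuclideanSpace ℝ (Fin M)))
    (ψ : ℕ → ℕ) (hψ : StrictMono ψ)
    (hlim : Tendsto (fun s => w (ψ s)) atTop (nhds wbar)) :
    wbar.1 ∈ {x ∈ X | ∀ j, (∑ i, h i (x i)) j ≤ b j} ∧
      ∀ x ∈ {x ∈ X | ∀ j, (∑ i, h i (x i)) j ≤ b j}, Φ wbar.1 x ≥ 0 := by
  classical
  -- Penalty function
  set P : (((i : Fin l) → EuclideanSpace ℝ (Fin (n i))) ×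
      (Fin l → EuclideanSpace ℝ (Fin M))) → ℝ :=
    fun q => ∑ i, φ (h i (q.1 i) - q.2 i) with hP
  have hPc : Continuous P := by
    apply continuous_finset_sum
    intro i _
    exact hφc.comp (((hhc i).comp ((continuous_apply i).comp continuous_fst)).sub
      ((continuous_apply i).comp continuous_snd))
  have hPnn : ∀ q, 0 ≤ P q := fun q => Finset.sum_nonneg fun i _ => hφ0 _
  have hlim1 : Tendsto (fun s => (w (ψ s)).1) atTop (nhds wbar.1) :=
    (continuous_fst.tendsto wbar).comp hlim
  have hlim2 : Tendsto (fun s => (w (ψ s)).2) atTop (nhds wbar.2) :=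
    (continuous_snd.tendsto wbar).comp hlim
  -- wbar.1 ∈ X
  have hbX : wbar.1 ∈ X := hXcl.mem_of_tendsto hlim1 (Eventually.of_forall fun s => hwX _)
  -- a feasible point with zero penalty
  obtain ⟨x₀, hx₀⟩ := hD
  obtain ⟨u₀, hu₀U, hu₀⟩ := hfeas x₀ hx₀
  have hP0 : ∀ (x : (i : Fin l) → EuclideanSpace ℝ (Fin (n i)))
      (u : Fin l → EuclideanSpace ℝ (Fin M)),
      (∀ i j, h i (x i) j ≤ u i j) → (∑ i, φ (h i (x i) - u i)) = 0 := by
    intro x u hxu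
    refine Finset.sum_eq_zero fun i _ => ?_
    rw [hφiff]
    intro j
    have := hxu i j
    simpa [sub_nonpos] using this
  -- bound : P (w k) ≤ Φ (w k).1 x₀ / τ k
  have hbound : ∀ k, P (w k) ≤ Φ (w k).1 x₀ / τ k := by
    intro k
    have := hsol k x₀ hx₀.1 u₀ hu₀U
    rw [hP0 x₀ u₀ hu₀] at this
    rw [le_div_iff₀ (hτpos k)]
    nlinarith [this]
  -- P (w (ψ s)) → 0
  have hτψ : Tendsto (fun s => τ (ψ s)) atTop atTop := hτ_inf.comp hψ.tendsto_atTop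
  have hnum : Tendsto (fun s => Φ (w (ψ s)).1 x₀) atTop (nhds (Φ wbar.1 x₀)) :=
    (hΦc.tendsto (wbar.1, x₀)).comp (hlim1.prodMk_nhds tendsto_const_nhds)
  have hPz : Tendsto (fun s => P (w (ψ s))) atTop (nhds 0) := by
    have hub : Tendsto (fun s => Φ (w (ψ s)).1 x₀ / τ (ψ s)) atTop (nhds 0) :=
      hnum.div_atTop hτψ
    refine squeeze_zero (fun s => hPnn _) (fun s => hbound (ψ s)) hub
  have hPbar : P wbar = 0 :=
    tendsto_nhds_unique ((hPc.tendsto wbar).comp hlim) hPz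
  -- each penalty term is zero at wbar
  have hterm : ∀ i, φ (h i (wbar.1 i) - wbar.2 i) = 0 := by
    intro i
    have := (Finset.sum_eq_zero_iff_of_nonneg
      (fun i _ => hφ0 (h i (wbar.1 i) - wbar.2 i))).mp hPbar
    exact this i (Finset.mem_univ i)
  have hle : ∀ i j, h i (wbar.1 i) j ≤ wbar.2 i j := by
    intro i j
    have := (hφiff _).mp (hterm i) j
    simpa [sub_nonpos] using this
  -- sum of wbar.2 equals b
  have hsumu : ∑ i, wbar.2 i = b := by
    have hc : Tendsto (fun s => ∑ i, (w (ψ s)).2 i) atTop (nhds (∑ i, wbar.2 i)) := by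
      refine tendsto_finset_sum _ fun i _ => ?_
      exact ((continuous_apply i).tendsto wbar.2).comp hlim2
    have : (fun s => ∑ i, (w (ψ s)).2 i) = fun _ => b := by
      funext s; exact hU _ (hwU (ψ s))
    rw [this] at hc
    exact tendsto_nhds_unique hc tendsto_const_nhds
  constructor
  · refine ⟨hbX, fun j => ?_⟩
    have h1 : (∑ i, h i (wbar.1 i)) j = ∑ i, h i (wbar.1 i) j :=
      by rw [WithLp.ofLp_sum]; exact Finset.sum_apply j _ _
    have h2 : (∑ i, wbar.2 i) j = ∑ i, wbar.2 i j :=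
      by rw [WithLp.ofLp_sum]; exact Finset.sum_apply j _ _
    rw [h1, ← hsumu, h2]
    exact Finset.sum_le_sum fun i _ => hle i j
  · intro x hx
    obtain ⟨u, huU, hxu⟩ := hfeas x hx
    have hk : ∀ k, 0 ≤ Φ (w k).1 x := by
      intro k
      have := hsol k x hx.1 u huU
      rw [hP0 x u hxu] at this
      nlinarith [hPnn (w k), hτpos k]
    have hconv : Tendsto (fun s => Φ (w (ψ s)).1 x) atTop (nhds (Φ wbar.1 x)) :=
      (hΦc.tendsto (wbar.1, x)).comp (hlim1.prodMk_nhds tendsto_const_nhds)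
    exact ge_of_tendsto hconv (Eventually.of_forall fun s => hk (ψ s))
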